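/- arXiv:2210.09278 — 3 statements merged into one kernel-verified Lean document; each statement's English description precedes it below -/
import Mathlib

section
/- Let V be a real vector space, μ : V × V → ℝ a symmetric positive semidefinite bilinear form, and σ : V × V → ℝ an antisymmetric bilinear form satisfying σ(x,y)² ≤ 4 μ(x,x) μ(y,y) for all x, y ∈ V. Define ω on the complexification V_ℂ as the sesquilinear extension of ω(x,y) = μ(x,y) + (1/2) i σ(x,y). Then ω is positive semidefinite: ω(z,z) ≥ 0 (i.e. ω(z,z) is real and nonnegative) for every z ∈ V_ℂ. -/
theorem stmt4 {V : Type*} [AddCommGroup V] [Module ℝ V]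
    (μ σ : V →ₗ[ℝ] V →ₗ[ℝ] ℝ)
    (hμsymm : ∀ x y, μ x y = μ y x) (hμpos : ∀ x, 0 ≤ μ x x)
    (hσanti : ∀ x y, σ x y = - σ y x)
    (hbound : ∀ x y, (σ x y) ^ 2 ≤ 4 * (μ x x) * (μ y y))
    (ω0 : V → V → ℂ)
    (hω0 : ∀ x y, ω0 x y = (μ x y : ℂ) + (Complex.I / 2) * (σ x y : ℂ))
    (ω : (V × V) → (V × V) → ℂ)
    (hω : ∀ z w, ω z w
        = ω0 z.1 w.1 + ω0 z.2 w.2 + Complex.I * ω0 z.1 w.2 - Complex.I * ω0 z.2 w.1) :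
    ∀ z, 0 ≤ (ω z z).re ∧ (ω z z).im = 0 := by
  rintro ⟨x, y⟩
  have hσxx : σ x x = 0 := by have := hσanti x x; linarith
  have hσyy : σ y y = 0 := by have := hσanti y y; linarith
  have hre : (ω (x, y) (x, y)).re = μ x x + μ y y - σ x y := by
    rw [hω]
    simp [hω0, hσxx, hσyy, Complex.add_re, Complex.mul_re, hμsymm x y, hσanti x y]
    ring
  have him : (ω (x, y) (x, y)).im = 0 := by
    rw [hω]
    simp [hω0, hσxx, hσyy, Complex.add_im, Complex.mul_im, hμsymm x y, hσanti x y]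
  refine ⟨?_, him⟩
  rw [hre]
  nlinarith [hbound x y, hμpos x, hμpos y, sq_nonneg (μ x x - μ y y), sq_nonneg (σ x y)]
end

section
/- Let V₀, V₁, V₂ be real inner product spaces, d₀ : V₀ → V₁, d₁ : V₁ → V₂ linear maps with (formal) adjoints δ₁ : V₁ → V₀, δ₂ : V₂ → V₁, i.e. ⟨d₀ a, b⟩ = ⟨a, δ₁ b⟩ and ⟨d₁ b, c⟩ = ⟨b, δ₂ c⟩ for all relevant vectors. Set Δ₀ = δ₁∘d₀ and Δ₁ = δ₂∘d₁ + d₀∘δ₁, and let m ∈ ℝ. Suppose a₀, π₀ ∈ V₀ and a₁, π₁ ∈ V₁ satisfy the constraints π₀ = −δ₁ a₁ and (Δ₀ + m²) a₀ = δ₁ π₁. Then ⟨π₁, π₁⟩ + ⟨a₁, (Δ₁ + m²) a₁⟩ − ⟨π₀, π₀⟩ − ⟨a₀, (Δ₀ + m²) a₀⟩ = ‖π₁ − d₀ a₀‖² + ‖d₁ a₁‖² + m² (‖a₁‖² + ‖a₀‖²). In particular the left-hand side is nonnegative. -/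
open scoped RealInnerProductSpace

theorem stmt6 {V0 V1 V2 : Type*}
    [NormedAddCommGroup V0] [InnerProductSpace ℝ V0]
    [NormedAddCommGroup V1] [InnerProductSpace ℝ V1]
    [NormedAddCommGroup V2] [InnerProductSpace ℝ V2]
    (d0 : V0 →ₗ[ℝ] V1) (d1 : V1 →ₗ[ℝ] V2)
    (δ1 : V1 →ₗ[ℝ] V0) (δ2 : V2 →ₗ[ℝ] V1)
    (hadj0 : ∀ (a : V0) (b : V1), ⟪d0 a, b⟫ = ⟪a, δ1 b⟫)
    (hadj1 : ∀ (b : V1) (c : V2), ⟪d1 b, c⟫ = ⟪b, δ2 c⟫)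
    (m : ℝ) (a0 π0 : V0) (a1 π1 : V1)
    (hc1 : π0 = - δ1 a1)
    (hc2 : δ1 (d0 a0) + m ^ 2 • a0 = δ1 π1) :
    ⟪π1, π1⟫ + ⟪a1, δ2 (d1 a1) + d0 (δ1 a1) + m ^ 2 • a1⟫
        - ⟪π0, π0⟫ - ⟪a0, δ1 (d0 a0) + m ^ 2 • a0⟫
      = ‖π1 - d0 a0‖ ^ 2 + ‖d1 a1‖ ^ 2 + m ^ 2 * (‖a1‖ ^ 2 + ‖a0‖ ^ 2) ∧
    0 ≤ ⟪π1, π1⟫ + ⟪a1, δ2 (d1 a1) + d0 (δ1 a1) + m ^ 2 • a1⟫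
        - ⟪π0, π0⟫ - ⟪a0, δ1 (d0 a0) + m ^ 2 • a0⟫ := by
  have h1 : ⟪a1, δ2 (d1 a1)⟫ = ‖d1 a1‖ ^ 2 := by
    rw [← hadj1, real_inner_self_eq_norm_sq]
  have h2 : ⟪a1, d0 (δ1 a1)⟫ = ‖δ1 a1‖ ^ 2 := by
    rw [real_inner_comm, hadj0, real_inner_self_eq_norm_sq]
  have h3 : ⟪d0 a0, π1⟫ = ‖d0 a0‖ ^ 2 + m ^ 2 * ‖a0‖ ^ 2 := by
    rw [hadj0, ← hc2, inner_add_right, ← hadj0, real_inner_smul_right,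
      real_inner_self_eq_norm_sq, real_inner_self_eq_norm_sq]
  have h4 : ⟪a0, δ1 (d0 a0) + m ^ 2 • a0⟫ = ‖d0 a0‖ ^ 2 + m ^ 2 * ‖a0‖ ^ 2 := by
    rw [inner_add_right, ← hadj0, real_inner_smul_right,
      real_inner_self_eq_norm_sq, real_inner_self_eq_norm_sq]
  have h5 : ‖π1 - d0 a0‖ ^ 2 = ‖π1‖ ^ 2 - 2 * ⟪π1, d0 a0⟫ + ‖d0 a0‖ ^ 2 :=
    norm_sub_sq_real π1 (d0 a0)
  have h6 : ⟪π1, d0 a0⟫ = ⟪d0 a0, π1⟫ := real_inner_comm _ _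
  have h7 : ⟪π0, π0⟫ = ‖δ1 a1‖ ^ 2 := by
    rw [hc1, inner_neg_neg, real_inner_self_eq_norm_sq]
  have key : ⟪a1, δ2 (d1 a1) + d0 (δ1 a1) + m ^ 2 • a1⟫
      = ‖d1 a1‖ ^ 2 + ‖δ1 a1‖ ^ 2 + m ^ 2 * ‖a1‖ ^ 2 := by
    rw [inner_add_right, inner_add_right, h1, h2, real_inner_smul_right,
      real_inner_self_eq_norm_sq]
  constructor
  · rw [key, h4, h5, h6, h3, h7, real_inner_self_eq_norm_sq]
    ring
  · have := norm_nonneg (π1 - d0 a0)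
    have h8 : (0:ℝ) ≤ ‖π1 - d0 a0‖ ^ 2 := sq_nonneg _
    have h9 : (0:ℝ) ≤ ‖d1 a1‖ ^ 2 := sq_nonneg _
    have h10 : (0:ℝ) ≤ m ^ 2 * (‖a1‖ ^ 2 + ‖a0‖ ^ 2) := by positivity
    rw [key, h4, h7, real_inner_self_eq_norm_sq]
    nlinarith [h5, h6, h3]
end

section
/- Let H be a complex Hilbert space, T a (possibly unbounded) selfadjoint operator with T ≥ c·id for some c > 0 (so T^α is defined for all α ∈ ℝ by the functional calculus and T⁻¹ ∈ B(H)), and D a closed densely defined operator with T⁻¹ D ⊆ D T⁻¹ (for x ∈ dom D: T⁻¹x ∈ dom D and D T⁻¹ x = T⁻¹ D x). Then for every α ≤ 0 and every x ∈ dom(D): T^α x ∈ dom(D) and D(T^α x) = T^α (D x). -/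
/-- Let `T` be a selfadjoint operator with `T ≥ c > 0`, with bounded (selfadjoint,
positive) inverse `Tinv`, and let `D` be a closed densely defined operator with
`T⁻¹ D ⊆ D T⁻¹`. Then for every `α ≤ 0`, the power `T^α = (T⁻¹)^(−α)` (defined via the
functional calculus applied to the bounded operator `Tinv`) satisfies
`T^α D ⊆ D T^α`, i.e. for `x ∈ dom D`, `T^α x ∈ dom D` and `D (T^α x) = T^α (D x)`. -/
theorem stmt18 {H : Type*} [NormedAddCommGroup H] [InnerProductSpace ℂ H] [CompleteSpace H]
    (T : H →ₗ.[ℂ] H) (hTsa : IsSelfAdjoint T)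
    (c : ℝ) (hc : 0 < c)
    (hlower : ∀ x : T.domain, c * ‖(x : H)‖ ^ 2 ≤ (inner ℂ (x : H) (T x) : ℂ).re)
    (Tinv : H →L[ℂ] H) (hTinvsa : IsSelfAdjoint Tinv)
    (hTinv_right : ∀ y : H, ∃ h : Tinv y ∈ T.domain, T ⟨Tinv y, h⟩ = y)
    (hTinv_left : ∀ x : T.domain, Tinv (T x) = (x : H))
    (D : H →ₗ.[ℂ] H) (hDdense : Dense (D.domain : Set H))
    (hDclosed : IsClosed (D.graph : Set (H × H)))
    (hcomm : ∀ (x : H) (hx : x ∈ D.domain),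
      ∃ h : Tinv x ∈ D.domain, D ⟨Tinv x, h⟩ = Tinv (D ⟨x, hx⟩)) :
    ∀ α : ℝ, α ≤ 0 →
      ∀ (x : H) (hx : x ∈ D.domain),
        ∃ h : cfc (fun t : ℝ => t ^ (-α)) Tinv x ∈ D.domain,
          D ⟨cfc (fun t : ℝ => t ^ (-α)) Tinv x, h⟩
            = cfc (fun t : ℝ => t ^ (-α)) Tinv (D ⟨x, hx⟩) := by
  intro α hα x hx
  have hfc : Continuous (fun t : ℝ => t ^ (-α)) :=
    Real.continuous_rpow_const (by linarith)
  -- the graph of `D` as a set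
  set G : Set (H × H) := (D.graph : Set (H × H)) with hG
  have hGsub : ∀ a b : H, (a, b) ∈ G ↔ ∃ h : a ∈ D.domain, D ⟨a, h⟩ = b := by
    intro a b
    constructor
    · intro hab
      rcases (LinearPMap.mem_graph_iff D).mp hab with ⟨y, h1, h2⟩
      have h1' : (y : H) = a := h1
      have h2' : D y = b := h2
      subst h1'
      exact ⟨y.2, h2'⟩
    · rintro ⟨h, rfl⟩
      exact D.mem_graph ⟨a, h⟩
  -- the set of bounded operators mapping the graph of `D` to itself
  set S : Set (H →L[ℂ] H) := {B | ∀ p ∈ G, (B p.1, B p.2) ∈ G} with hS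
  have hSclosed : IsClosed S := by
    have : S = ⋂ p ∈ G, {B : H →L[ℂ] H | (B p.1, B p.2) ∈ G} := by
      ext B; simp [hS, Set.mem_iInter]
    rw [this]
    refine isClosed_biInter fun p _ => ?_
    have hcont : Continuous fun B : H →L[ℂ] H => (B p.1, B p.2) :=
      ((ContinuousLinearMap.apply ℂ H p.1).continuous).prodMk
        ((ContinuousLinearMap.apply ℂ H p.2).continuous)
    exact hDclosed.preimage hcont
  have hTinvS : Tinv ∈ S := by
    rintro ⟨a, b⟩ hp
    rw [hGsub] at hp ⊢
    obtain ⟨ha, hab⟩ := hp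
    obtain ⟨h1, h2⟩ := hcomm a ha
    exact ⟨h1, by rw [h2, hab]⟩
  have honeS : (1 : H →L[ℂ] H) ∈ S := fun p hp => hp
  have hmulS : ∀ A B : H →L[ℂ] H, A ∈ S → B ∈ S → A * B ∈ S := by
    intro A B hA hB p hp
    exact hA (B p.1, B p.2) (hB p hp)
  have haddS : ∀ A B : H →L[ℂ] H, A ∈ S → B ∈ S → A + B ∈ S := by
    intro A B hA hB p hp
    exact D.graph.add_mem (hA p hp) (hB p hp)
  have hsmulS : ∀ (r : ℝ) (B : H →L[ℂ] H), B ∈ S → r • B ∈ S := by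
    intro r B hB p hp
    exact D.graph.smul_of_tower_mem r (hB p hp)
  -- all real polynomials in `Tinv` belong to `S`
  have hpoly : ∀ q : Polynomial ℝ, (Polynomial.aeval Tinv q : H →L[ℂ] H) ∈ S := by
    intro q
    induction q using Polynomial.induction_on with
    | C r =>
      have : (Polynomial.aeval Tinv (Polynomial.C r) : H →L[ℂ] H) = r • 1 := by
        simp [Algebra.algebraMap_eq_smul_one]
      rw [this]; exact hsmulS r 1 honeS
    | add p q hp hq =>
      rw [map_add]; exact haddS _ _ hp hq
    | monomial n r ih =>
      have : (Polynomial.aeval Tinv (Polynomial.C r * Polynomial.X ^ (n + 1)) : H →L[ℂ] H)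
          = (Polynomial.aeval Tinv (Polynomial.C r * Polynomial.X ^ n) : H →L[ℂ] H) * Tinv := by
        rw [pow_succ, ← mul_assoc, map_mul, Polynomial.aeval_X]
      rw [this]; exact hmulS _ _ ih hTinvS
  -- cfc of polynomials
  have hKc : CompactSpace (spectrum ℝ Tinv) :=
    isCompact_iff_compactSpace.mp (spectrum.isCompact Tinv)
  have key : ∀ q : Polynomial ℝ,
      cfcHom hTinvsa (R := ℝ) (q.toContinuousMapOn (spectrum ℝ Tinv))
        = Polynomial.aeval Tinv q := by
    intro q
    have h1 : cfc q.eval Tinv = Polynomial.aeval Tinv q := cfc_polynomial q Tinv hTinvsa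
    rw [cfc_apply q.eval Tinv hTinvsa (Polynomial.continuous q).continuousOn] at h1
    rw [← h1]
    rfl
  -- cfc f Tinv is in the closure of polynomials in Tinv, hence in S
  have hmem : cfc (fun t : ℝ => t ^ (-α)) Tinv ∈ S := by
    rw [cfc_apply (fun t : ℝ => t ^ (-α)) Tinv hTinvsa hfc.continuousOn]
    have h1 : (⟨_, hfc.continuousOn.restrict⟩ : C(spectrum ℝ Tinv, ℝ)) ∈
        closure (polynomialFunctions (spectrum ℝ Tinv) : Set C(spectrum ℝ Tinv, ℝ)) := by
      have h := polynomialFunctions.topologicalClosure (spectrum ℝ Tinv)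
      rw [← Subalgebra.topologicalClosure_coe, h]
      simp
    have hmaps : Set.MapsTo (cfcHom hTinvsa (R := ℝ))
        (polynomialFunctions (spectrum ℝ Tinv) : Set C(spectrum ℝ Tinv, ℝ)) S := by
      intro g hg
      rw [polynomialFunctions_coe] at hg
      obtain ⟨q, rfl⟩ := hg
      rw [show Polynomial.toContinuousMapOnAlgHom (spectrum ℝ Tinv) q
        = q.toContinuousMapOn (spectrum ℝ Tinv) from rfl, key q]
      exact hpoly q
    have h2 := map_mem_closure (cfcHom_isClosedEmbedding hTinvsa (R := ℝ)).continuous h1 hmaps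
    rwa [hSclosed.closure_eq] at h2
  -- conclude
  have hxg : ((x, D ⟨x, hx⟩) : H × H) ∈ G := (hGsub x _).mpr ⟨hx, rfl⟩
  have := hmem (x, D ⟨x, hx⟩) hxg
  exact (hGsub _ _).mp this
end
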